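/- Let n > 1 be an integer that is not prime, and let λ(n) be the number of distinct prime factors of n. If the smallest prime factor of n is greater than λ(n), then every clique of order λ(n) + 1 in G_{ℤ/nℤ} is a dominating set of G_{ℤ/nℤ}, and no clique of order at most λ(n) dominates G_{ℤ/nℤ}. Hence the clique domination number of G_{ℤ/nℤ} is λ(n) + 1. -/

import Mathlib

/-- The unitary Cayley graph of a commutative ring: `a` is adjacent to `b`
iff `a ≠ b` and `a - b` is a unit. -/
def unitaryCayley (X : Type*) [CommRing X] : SimpleGraph X where
  Adj a b := a ≠ b ∧ IsUnit (a - b)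
  symm := by
    constructor
    rintro a b ⟨h1, h2⟩
    exact ⟨h1.symm, neg_sub a b ▸ h2.neg⟩
  loopless := by constructor; rintro a ⟨h, _⟩; exact h rfl

/-- A set of vertices dominates a graph if every vertex is in the set or
adjacent to a member of the set. -/
def Dominates {V : Type*} (G : SimpleGraph V) (s : Finset V) : Prop :=
  ∀ v, v ∈ s ∨ ∃ w ∈ s, G.Adj v w

lemma aux_nonunit {n : ℕ} [NeZero n] {x : ZMod n} (hx : ¬ IsUnit x) :
    ∃ p, p.Prime ∧ p ∣ n ∧ p ∣ x.val := by
  have hco : ¬ Nat.Coprime x.val n := by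
    intro hc
    apply hx
    have := (ZMod.isUnit_iff_coprime x.val n).mpr hc
    rwa [ZMod.natCast_val, ZMod.cast_id] at this
  obtain ⟨p, pp, hpd⟩ := Nat.exists_prime_and_dvd hco
  exact ⟨p, pp, hpd.trans (Nat.gcd_dvd_right _ _), hpd.trans (Nat.gcd_dvd_left _ _)⟩

lemma aux_cast_zero {n p : ℕ} [NeZero n] (hd : p ∣ n) {x : ZMod n} (hpx : p ∣ x.val) :
    ZMod.castHom hd (ZMod p) x = 0 := by
  have h1 : ((x.val : ℕ) : ZMod n) = x := by rw [ZMod.natCast_val, ZMod.cast_id]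
  rw [← h1, map_natCast]
  exact (ZMod.natCast_eq_zero_iff _ _).mpr hpx

lemma aux_nonunit_of_cast {n p : ℕ} (pp : p.Prime) (hd : p ∣ n) {x : ZMod n}
    (hx : ZMod.castHom hd (ZMod p) x = 0) : ¬ IsUnit x := by
  intro hu
  haveI := Fact.mk pp
  have h2 := hu.map (ZMod.castHom hd (ZMod p))
  rw [hx] at h2
  exact not_isUnit_zero h2

theorem unitaryCayley_clique_domination (n : ℕ) (hn : 1 < n) (hnp : ¬ n.Prime)
    (h : n.primeFactors.card < n.minFac) :
    (∀ s : Finset (ZMod n),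
        (unitaryCayley (ZMod n)).IsNClique (n.primeFactors.card + 1) s →
        Dominates (unitaryCayley (ZMod n)) s) ∧
      ∀ (m : ℕ), m ≤ n.primeFactors.card → ∀ s : Finset (ZMod n),
        (unitaryCayley (ZMod n)).IsNClique m s →
        ¬ Dominates (unitaryCayley (ZMod n)) s := by
  haveI : NeZero n := ⟨by omega⟩
  constructor
  · -- Part 1: every clique of size λ+1 dominates
    intro s hs v
    by_cases hv : v ∈ s
    · exact Or.inl hv
    right
    by_contra hno
    push_neg at hno
    have hnu : ∀ w ∈ s, ¬ IsUnit (v - w) := by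
      intro w hw hu
      exact hno w hw ⟨fun hvw => hv (hvw ▸ hw), hu⟩
    have hex : ∀ w : ZMod n, ∃ p, w ∈ s → p ∈ n.primeFactors ∧ p ∣ (v - w).val := by
      intro w
      by_cases hw : w ∈ s
      · obtain ⟨p, pp, hpn, hpv⟩ := aux_nonunit (hnu w hw)
        exact ⟨p, fun _ => ⟨Nat.mem_primeFactors.mpr ⟨pp, hpn, by omega⟩, hpv⟩⟩
      · exact ⟨2, fun hw' => absurd hw' hw⟩
    choose f hf using hex
    have hmaps : ∀ w ∈ s, f w ∈ n.primeFactors := fun w hw => (hf w hw).1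
    have hcard : n.primeFactors.card < s.card := by rw [hs.2]; omega
    obtain ⟨a, ha, b, hb, hab, hfab⟩ :=
      Finset.exists_ne_map_eq_of_card_lt_of_maps_to hcard hmaps
    have pp : (f a).Prime := Nat.prime_of_mem_primeFactors (hmaps a ha)
    have hdvd : f a ∣ n := Nat.dvd_of_mem_primeFactors (hmaps a ha)
    have h1 : ZMod.castHom hdvd (ZMod (f a)) (v - a) = 0 := aux_cast_zero hdvd (hf a ha).2
    have h2 : ZMod.castHom hdvd (ZMod (f a)) (v - b) = 0 := by
      have := aux_cast_zero (x := v - b) hdvd (hfab ▸ (hf b hb).2)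
      exact this
    have h3 : ZMod.castHom hdvd (ZMod (f a)) (b - a) = 0 := by
      have : b - a = (v - a) - (v - b) := by ring
      rw [this, map_sub, h1, h2, sub_zero]
    have hadj := hs.1 hb ha hab.symm
    exact aux_nonunit_of_cast pp hdvd h3 hadj.2
  · -- Part 2: no clique of size ≤ λ dominates
    intro m hm s hs hdom
    have hscard : s.card = m := hs.2
    by_cases hone : s.card = 1
    · -- special case: singleton clique
      obtain ⟨a, rfl⟩ := Finset.card_eq_one.mp hone
      set p := n.minFac with hp
      have pp : p.Prime := Nat.minFac_prime (by omega)
      have hpn : p ∣ n := Nat.minFac_dvd n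
      have hplt : p < n := by
        have hle : p ≤ n := Nat.minFac_le (by omega)
        rcases lt_or_eq_of_le hle with h' | h'
        · exact h'
        · exact absurd (h' ▸ pp) hnp
      have hp0 : (p : ZMod n) ≠ 0 := by
        rw [Ne, ZMod.natCast_eq_zero_iff]
        intro hd
        have := Nat.le_of_dvd pp.pos hd
        omega
      set v := a + (p : ZMod n) with hv
      have hva : v ≠ a := by
        intro hva
        apply hp0
        have h' : a + (p : ZMod n) = a + 0 := by rw [add_zero]; exact hva
        exact add_left_cancel h'
      have hnu : ¬ IsUnit (v - a) := by
        have hva2 : v - a = (p : ZMod n) := by rw [hv]; ring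
        rw [hva2]
        refine aux_nonunit_of_cast pp hpn ?_
        rw [map_natCast, ZMod.natCast_self]
      rcases hdom v with hin | ⟨w, hw, hadj⟩
      · exact hva (Finset.mem_singleton.mp hin)
      · rw [Finset.mem_singleton] at hw
        exact hnu (hw ▸ hadj.2)
    · -- general case via CRT
      have hsle : s.card ≤ n.primeFactors.card := by omega
      obtain ⟨t, hts, htc⟩ := Finset.exists_subset_card_eq hsle
      have e : (s : Finset (ZMod n)) ≃ t := Finset.equivOfCardEq htc.symm
      set P : ZMod n → ℕ := fun w => if hw : w ∈ s then (e ⟨w, hw⟩ : ℕ) else 1 with hP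
      have hPmem : ∀ w ∈ s, P w ∈ n.primeFactors := by
        intro w hw
        simp only [hP, dif_pos hw]
        exact hts (e ⟨w, hw⟩).2
      have hPprime : ∀ w ∈ s, (P w).Prime := fun w hw =>
        Nat.prime_of_mem_primeFactors (hPmem w hw)
      have hPdvd : ∀ w ∈ s, P w ∣ n := fun w hw =>
        Nat.dvd_of_mem_primeFactors (hPmem w hw)
      have hPne : ∀ w ∈ s, P w ≠ 0 := fun w hw => (hPprime w hw).ne_zero
      have hPinj : ∀ w₁ ∈ s, ∀ w₂ ∈ s, P w₁ = P w₂ → w₁ = w₂ := by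
        intro w₁ h₁ w₂ h₂ hPe
        simp only [hP, dif_pos h₁, dif_pos h₂] at hPe
        have := e.injective (Subtype.ext hPe)
        exact Subtype.ext_iff.mp this
      have hPP : Set.Pairwise (s : Set (ZMod n)) (Function.onFun Nat.Coprime P) := by
        intro w₁ h₁ w₂ h₂ hne
        have p1 := hPprime w₁ h₁
        have p2 := hPprime w₂ h₂
        refine (Nat.coprime_primes p1 p2).mpr ?_
        intro hPe
        exact hne (hPinj w₁ h₁ w₂ h₂ hPe)
      obtain ⟨k, hk⟩ := Nat.chineseRemainderOfFinset (fun w => w.val) P s hPne hPP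
      set v : ZMod n := (k : ZMod n) with hv
      have hnu : ∀ w ∈ s, ¬ IsUnit (v - w) := by
        intro w hw
        refine aux_nonunit_of_cast (hPprime w hw) (hPdvd w hw) ?_
        rw [map_sub]
        have h1 : ZMod.castHom (hPdvd w hw) (ZMod (P w)) v = (k : ZMod (P w)) := by
          rw [hv, map_natCast]
        have h2 : ZMod.castHom (hPdvd w hw) (ZMod (P w)) w = (w.val : ZMod (P w)) := by
          rw [ZMod.castHom_apply, ZMod.natCast_val]
        rw [h1, h2, (ZMod.natCast_eq_natCast_iff _ _ _).mpr (hk w hw), sub_self]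
      have hvs : v ∉ s := by
        intro hvin
        have h1lt : 1 < s.card := by
          have := Finset.card_pos.mpr ⟨v, hvin⟩
          omega
        obtain ⟨w, hw, hwv⟩ := Finset.exists_mem_ne h1lt v
        have hadj := hs.1 hvin hw (Ne.symm hwv)
        exact hnu w hw hadj.2
      rcases hdom v with hin | ⟨w, hw, hadj⟩
      · exact hvs hin
      · exact hnu w hw hadj.2
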